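/- Let R be a topological ring with identity and let I₁, …, Iₙ be two-sided ideals of R that are pairwise co-maximal (i.e. Iₖ + Iₗ = R for all k ≠ l). Then for every neighborhood ε of 0 in R there exists a neighborhood δ of 0 such that ⋂ₖ₌₁ⁿ (Iₖ + δ) ⊆ (⋂ₖ₌₁ⁿ Iₖ) + ε. -/

import Mathlib

open Pointwise

/-- If `I 0, …, I (n-1)` are pairwise co-maximal two-sided ideals of a topological ring `R`,
then for every neighborhood `ε` of `0` there is a neighborhood `δ` of `0` with
`⋂ k (I k + δ) ⊆ (⋂ k I k) + ε`. -/
theorem inter_nhds_of_pairwise_comaximal {R : Type*} [Ring R] [TopologicalSpace R]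
    [IsTopologicalRing R] [T2Space R] {n : ℕ} (I : Fin n → TwoSidedIdeal R)
    (h : ∀ k l : Fin n, k ≠ l → (I k : Set R) + (I l : Set R) = Set.univ) :
    ∀ ε ∈ nhds (0 : R), ∃ δ ∈ nhds (0 : R),
      (⋂ k, ((I k : Set R) + δ)) ⊆ (⋂ k, (I k : Set R)) + ε := by
  intro ε hε
  -- Step 1: construct approximate idempotents e k
  have he : ∀ k : Fin n, ∃ e : R, (1 - e) ∈ I k ∧ ∀ l, l ≠ k → e ∈ I l := by
    intro k
    have key : ∀ s : Finset (Fin n), k ∉ s →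
        ∃ e : R, (1 - e) ∈ I k ∧ ∀ l ∈ s, e ∈ I l := by
      intro s
      induction s using Finset.induction with
      | empty => exact fun _ => ⟨1, by simp, by simp⟩
      | @insert l s hls ih =>
        intro hk
        have hkl : k ≠ l := fun hkl => hk (by simp [hkl])
        obtain ⟨e, he1, he2⟩ := ih (fun hks => hk (Finset.mem_insert_of_mem hks))
        -- comaximality of I k and I l
        have : (1 : R) ∈ (I k : Set R) + (I l : Set R) := by
          rw [h k l hkl]; trivial
        obtain ⟨a, ha, b, hb, hab⟩ := this
        have hab' : a + b = 1 := hab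
        refine ⟨e * b, ?_, ?_⟩
        · -- 1 - e*b = (1 - e) + e*(1 - b) = (1-e) + e*a
          have hb1 : (1 : R) - b = a := by rw [← hab']; noncomm_ring
          have : (1 : R) - e * b = (1 - e) + e * ((1 : R) - b) := by noncomm_ring
          rw [this, hb1]
          exact (I k).add_mem he1 ((I k).mul_mem_left _ _ ha)
        · intro m hm
          rcases Finset.mem_insert.1 hm with hml | hms
          · subst hml; exact (I m).mul_mem_left _ _ hb
          · exact (I m).mul_mem_right _ _ (he2 m hms)
    obtain ⟨e, h1, h2⟩ := key (Finset.univ.erase k) (by simp)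
    exact ⟨e, h1, fun l hl => h2 l (by simp [hl])⟩
  choose e he1 he2 using he
  -- Step 2: continuity gives a box neighborhood
  have cont : Filter.Tendsto (fun d : Fin n → R => ∑ k, d k * e k)
      (nhds 0) (nhds 0) := by
    have hc : Continuous (fun d : Fin n → R => ∑ k, d k * e k) :=
      continuous_finset_sum _ fun k _ => (continuous_apply k).mul continuous_const
    simpa using hc.tendsto 0
  have hmem : (fun d : Fin n → R => ∑ k, d k * e k) ⁻¹' ε ∈ nhds (0 : Fin n → R) :=
    cont hε
  rw [nhds_pi, Filter.mem_pi] at hmem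
  obtain ⟨S, hSfin, t, ht, hsub⟩ := hmem
  refine ⟨⋂ k, t k, Filter.iInter_mem.2 ht, ?_⟩
  intro x hx
  simp only [Set.mem_iInter] at hx
  have hx' : ∀ k, ∃ a ∈ (I k : Set R), ∃ dd ∈ ⋂ k, t k, a + dd = x := fun k => hx k
  choose a ha d hd hadx using hx'
  -- the "small" term
  have hsmall : ∑ k, d k * e k ∈ ε := by
    apply hsub
    intro i _
    exact Set.mem_iInter.1 (hd i) i
  -- the "ideal" term
  set j : R := ∑ k, a k * e k + x * (1 - ∑ k, e k) with hj
  have hjmem : j ∈ ⋂ k, (I k : Set R) := by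
    rw [Set.mem_iInter]
    intro m
    apply (I m).add_mem
    · apply TwoSidedIdeal.finsetSum_mem
      intro k _
      by_cases hkm : k = m
      · exact (I m).mul_mem_right _ _ (hkm ▸ ha k)
      · exact (I m).mul_mem_left _ _ (he2 k m (Ne.symm hkm))
    · apply (I m).mul_mem_left
      have : (1 : R) - ∑ k, e k
          = (1 - e m) - ∑ k ∈ Finset.univ.erase m, e k := by
        rw [← Finset.add_sum_erase _ _ (Finset.mem_univ m), sub_add_eq_sub_sub]
      rw [this]
      apply (I m).sub_mem (he1 m)
      apply TwoSidedIdeal.finsetSum_mem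
      intro k hk
      exact he2 k m (Finset.ne_of_mem_erase hk).symm
  refine ⟨j, hjmem, ∑ k, d k * e k, hsmall, ?_⟩
  -- algebraic identity : j + ∑ d k * e k = x
  have hsum : ∑ k, a k * e k + ∑ k, d k * e k = x * ∑ k, e k := by
    rw [← Finset.sum_add_distrib, Finset.mul_sum]
    refine Finset.sum_congr rfl fun k _ => ?_
    rw [← add_mul, hadx k]
  show (∑ k, a k * e k + x * (1 - ∑ k, e k)) + ∑ k, d k * e k = x
  rw [mul_one_sub]
  calc (∑ k, a k * e k + (x - x * ∑ k, e k)) + ∑ k, d k * e k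
      = (∑ k, a k * e k + ∑ k, d k * e k) + (x - x * ∑ k, e k) := by abel
    _ = x * (∑ k, e k) + (x - x * ∑ k, e k) := by rw [hsum]
    _ = x := by abel
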